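/- The number of k-dimensional faces of an arrangement of n hyperplanes in ℝ^d is at most binom(n, d−k) · Σ_{i=0}^{k} binom(n − d + k, i). In particular, the total number of faces of an arrangement of n hyperplanes in ℝ^d is O(n^d) for fixed d. -/

import Mathlib

open Module Submodule Set

private lemma pascal_sum (m k : ℕ) :
    ∑ i ∈ Finset.range (k+1+1), (m+1).choose i
      = ∑ i ∈ Finset.range (k+1+1), m.choose i + ∑ i ∈ Finset.range (k+1), m.choose i := by
  induction k with
  | zero => simp [Finset.sum_range_succ]; omega
  | succ k ih =>
      rw [Finset.sum_range_succ, ih]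
      rw [show ∑ i ∈ Finset.range (k+1+1+1), Nat.choose m i
            = ∑ i ∈ Finset.range (k+1+1), Nat.choose m i + Nat.choose m (k+2) from
          Finset.sum_range_succ _ _,
        show ∑ i ∈ Finset.range (k+1+1), Nat.choose m i
            = ∑ i ∈ Finset.range (k+1), Nat.choose m i + Nat.choose m (k+1) from
          Finset.sum_range_succ _ _]
      have : (m+1).choose (k+2) = m.choose (k+1) + m.choose (k+2) := Nat.choose_succ_succ m (k+1)
      omega

private lemma eps_min {ι : Type*} (t : Finset ι) (f : ι → ℝ) (hf : ∀ i ∈ t, 0 < f i) :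
    ∃ ε : ℝ, 0 < ε ∧ ∀ i ∈ t, ε ≤ f i := by
  classical
  induction t using Finset.induction_on with
  | empty => exact ⟨1, one_pos, by simp⟩
  | @insert x s hx ih =>
      obtain ⟨ε, hε, hle⟩ := ih (fun i hi => hf i (Finset.mem_insert_of_mem hi))
      refine ⟨min ε (f x), lt_min hε (hf x (Finset.mem_insert_self x s)), ?_⟩
      intro i hi
      rcases Finset.mem_insert.mp hi with rfl | hi
      · exact min_le_right _ _
      · exact le_trans (min_le_left _ _) (hle i hi)

set_option maxHeartbeats 1000000 in
private lemma regionBound {V : Type*} [AddCommGroup V] [Module ℝ V] [FiniteDimensional ℝ V] :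
    ∀ (m k : ℕ) (s : Set V), Convex ℝ s →
      Module.finrank ℝ (vectorSpan ℝ s) ≤ k → ∀ (g : Fin m → (V →ᵃ[ℝ] ℝ)),
      {τ : Fin m → SignType | (∀ i, τ i ≠ 0) ∧ ∃ x ∈ s, ∀ i, SignType.sign (g i x) = τ i}.ncard
        ≤ ∑ i ∈ Finset.range (k+1), m.choose i := by
  intro m
  induction m with
  | zero =>
      intro k s hs hdim g
      have h1 : {τ : Fin 0 → SignType | (∀ i, τ i ≠ 0) ∧ ∃ x ∈ s, ∀ i, SignType.sign (g i x) = τ i}.ncard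
          ≤ (Set.univ : Set (Fin 0 → SignType)).ncard :=
        Set.ncard_le_ncard (Set.subset_univ _) (Set.toFinite _)
      have h2 : (Set.univ : Set (Fin 0 → SignType)).ncard = 1 := by
        rw [Set.ncard_univ]; exact Nat.card_unique
      have h3 : (1:ℕ) ≤ ∑ i ∈ Finset.range (k+1), Nat.choose 0 i := by
        have hmem : (0:ℕ) ∈ Finset.range (k+1) := by simp
        have := Finset.single_le_sum (f := fun i => Nat.choose 0 i) (fun i _ => Nat.zero_le _) hmem
        simpa using this
      exact h1.trans (by rw [h2]; exact h3)
  | succ m ih =>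
      intro k s hs hdim g
      classical
      set gl := g (Fin.last m) with hgl
      set A := {τ : Fin (m+1) → SignType | (∀ i, τ i ≠ 0) ∧ ∃ x ∈ s, ∀ i, SignType.sign (g i x) = τ i} with hA
      set ρ : (Fin (m+1) → SignType) → (Fin m → SignType) := fun τ => τ ∘ Fin.castSucc with hρ
      set Apos := {τ ∈ A | τ (Fin.last m) = 1} with hApos
      set Aneg := {τ ∈ A | τ (Fin.last m) = -1} with hAneg
      set D := {τ' : Fin m → SignType | (∀ i, τ' i ≠ 0) ∧
          ∃ x ∈ s, ∀ i : Fin m, SignType.sign (g i.castSucc x) = τ' i} with hD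
      -- A ⊆ Apos ∪ Aneg
      have hsub : A ⊆ Apos ∪ Aneg := by
        intro τ hτ
        have hne := hτ.1 (Fin.last m)
        rcases h : τ (Fin.last m) with _ | _ | _
        · exact absurd h hne
        · exact Or.inr ⟨hτ, h⟩
        · exact Or.inl ⟨hτ, h⟩
      -- injectivity of ρ on Apos, Aneg
      have hinj : ∀ c : SignType, Set.InjOn ρ {τ ∈ A | τ (Fin.last m) = c} := by
        intro c τ₁ h₁ τ₂ h₂ heq
        funext i
        induction i using Fin.lastCases with
        | last => rw [h₁.2, h₂.2]
        | cast j => exact congrFun heq j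
      have himg : ∀ c : SignType, ρ '' {τ ∈ A | τ (Fin.last m) = c} ⊆ D := by
        rintro c τ' ⟨τ, ⟨⟨hstrict, x, hxs, hsign⟩, _⟩, rfl⟩
        exact ⟨fun i => hstrict i.castSucc, x, hxs, fun i => hsign i.castSucc⟩
      -- main cardinality chain
      have hchain : A.ncard ≤ (ρ '' Apos ∩ ρ '' Aneg).ncard + D.ncard := by
        have e1 : A.ncard ≤ Apos.ncard + Aneg.ncard :=
          le_trans (Set.ncard_le_ncard hsub (Set.toFinite _)) (Set.ncard_union_le _ _)
        have e2 : Apos.ncard = (ρ '' Apos).ncard := (Set.ncard_image_of_injOn (hinj 1)).symm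
        have e3 : Aneg.ncard = (ρ '' Aneg).ncard := (Set.ncard_image_of_injOn (hinj (-1))).symm
        have e4 : (ρ '' Apos ∩ ρ '' Aneg).ncard + (ρ '' Apos ∪ ρ '' Aneg).ncard
            = (ρ '' Apos).ncard + (ρ '' Aneg).ncard :=
          Set.ncard_inter_add_ncard_union _ _ (Set.toFinite _) (Set.toFinite _)
        have e5 : (ρ '' Apos ∪ ρ '' Aneg).ncard ≤ D.ncard :=
          Set.ncard_le_ncard (Set.union_subset (himg 1) (himg (-1))) (Set.toFinite _)
        omega
      have hDle : D.ncard ≤ ∑ i ∈ Finset.range (k+1), m.choose i :=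
        ih k s hs hdim (fun j => g j.castSucc)
      by_cases hdeg : ∀ v ∈ vectorSpan ℝ s, gl.linear v = 0
      · -- degenerate case : intersection is empty
        have hempty : ρ '' Apos ∩ ρ '' Aneg = ∅ := by
          rw [Set.eq_empty_iff_forall_notMem]
          rintro τ' ⟨⟨τ₁, ⟨⟨_, x₁, hx₁, hs₁⟩, hlast₁⟩, rfl⟩, ⟨τ₂, ⟨⟨_, x₂, hx₂, hs₂⟩, hlast₂⟩, hran⟩⟩
          have hp : 0 < gl x₁ := sign_eq_one_iff.mp (by rw [hs₁ (Fin.last m), hlast₁])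
          have hq : gl x₂ < 0 := sign_eq_neg_one_iff.mp (by rw [hs₂ (Fin.last m), hlast₂])
          have hz : gl x₁ - gl x₂ = 0 := by
            have h0 : gl.linear (x₁ -ᵥ x₂) = gl x₁ -ᵥ gl x₂ := gl.linearMap_vsub x₁ x₂
            have := hdeg (x₁ -ᵥ x₂) (vsub_mem_vectorSpan ℝ hx₁ hx₂)
            rw [this] at h0
            simpa [vsub_eq_sub] using h0.symm
          linarith
        have : A.ncard ≤ D.ncard := by rw [hempty] at hchain; simpa using hchain
        calc A.ncard ≤ ∑ i ∈ Finset.range (k+1), m.choose i := le_trans this hDle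
          _ ≤ ∑ i ∈ Finset.range (k+1), (m+1).choose i :=
            Finset.sum_le_sum (fun i _ => Nat.choose_le_choose i (Nat.le_succ m))
      · push_neg at hdeg
        obtain ⟨v, hv, hlv⟩ := hdeg
        -- k ≥ 1
        have hvne : v ≠ 0 := fun h => hlv (by rw [h, map_zero])
        have hpos : 0 < Module.finrank ℝ (vectorSpan ℝ s) := by
          have : Nontrivial (vectorSpan ℝ s) := ⟨⟨v, hv⟩, 0, by simp [hvne]⟩
          exact Module.finrank_pos
        obtain ⟨k', rfl⟩ : ∃ k', k = k' + 1 := by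
          cases k with
          | zero => omega
          | succ k' => exact ⟨k', rfl⟩
        set s' := s ∩ {x | gl x = 0} with hs'def
        have hs' : Convex ℝ s' := hs.inter (by
          have : {x | gl x = 0} = gl ⁻¹' {(0:ℝ)} := by ext x; simp
          rw [this]; exact (convex_singleton (0:ℝ)).affine_preimage gl)
        have hker : vectorSpan ℝ s' ≤ LinearMap.ker gl.linear := by
          rw [vectorSpan_def, Submodule.span_le]
          rintro u ⟨x, hx, y, hy, rfl⟩
          have : gl.linear (x -ᵥ y) = gl x -ᵥ gl y := gl.linearMap_vsub x y
          simp only [LinearMap.mem_ker, SetLike.mem_coe]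
          rw [this, hx.2, hy.2]; simp
        have hlt : vectorSpan ℝ s' < vectorSpan ℝ s := by
          refine lt_of_le_of_ne (vectorSpan_mono ℝ Set.inter_subset_left) ?_
          intro h
          exact hlv (hker (h ▸ hv))
        have hdim' : Module.finrank ℝ (vectorSpan ℝ s') ≤ k' := by
          have := Submodule.finrank_lt_finrank_of_lt hlt
          omega
        set R := {τ' : Fin m → SignType | (∀ i, τ' i ≠ 0) ∧
            ∃ x ∈ s', ∀ i : Fin m, SignType.sign (g i.castSucc x) = τ' i} with hR
        have hRle : R.ncard ≤ ∑ i ∈ Finset.range (k'+1), m.choose i :=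
          ih k' s' hs' hdim' (fun j => g j.castSucc)
        -- intersection ⊆ R
        have hintR : ρ '' Apos ∩ ρ '' Aneg ⊆ R := by
          rintro τ' ⟨⟨τ₁, ⟨⟨hst₁, x₁, hx₁, hs₁⟩, hlast₁⟩, rfl⟩, ⟨τ₂, ⟨⟨_, x₂, hx₂, hs₂⟩, hlast₂⟩, hran⟩⟩
          have hp : 0 < gl x₁ := sign_eq_one_iff.mp (by rw [hs₁ (Fin.last m), hlast₁])
          have hq : gl x₂ < 0 := sign_eq_neg_one_iff.mp (by rw [hs₂ (Fin.last m), hlast₂])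
          set p := gl x₁ with hpdef
          set q := gl x₂ with hqdef
          have hpq : 0 < p - q := by linarith
          set t := p / (p - q) with htdef
          have ht0 : 0 < t := div_pos hp hpq
          have ht1 : t < 1 := by
            rw [div_lt_one hpq]; linarith
          set z := (1 - t) • x₁ + t • x₂ with hzdef
          have hzs : z ∈ s := hs hx₁ hx₂ (by linarith) (le_of_lt ht0) (by ring)
          have hcombo : ∀ f : V →ᵃ[ℝ] ℝ, f z = (1 - t) * f x₁ + t * f x₂ := by
            intro f
            have := Convex.combo_affine_apply (f := f) (x := x₁) (y := x₂)
              (a := 1 - t) (b := t) (by ring)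
            simpa [smul_eq_mul] using this
          have hglz : gl z = 0 := by
            rw [hcombo gl, htdef]
            field_simp
            ring
          refine ⟨fun i => by
              have := hst₁ i.castSucc
              simpa [hρ] using this, z, ⟨hzs, hglz⟩, ?_⟩
          intro i
          have h₁ : SignType.sign (g i.castSucc x₁) = τ₁ i.castSucc := hs₁ i.castSucc
          have h₂ : SignType.sign (g i.castSucc x₂) = τ₂ i.castSucc := hs₂ i.castSucc
          have heqτ : τ₂ i.castSucc = τ₁ i.castSucc := by
            have := congrFun hran i
            simpa [hρ] using this
          rw [hcombo (g i.castSucc)]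
          rcases hsig : τ₁ i.castSucc with _ | _ | _
          · exact absurd hsig (hst₁ i.castSucc)
          · -- neg
            have hx1neg : g i.castSucc x₁ < 0 := sign_eq_neg_one_iff.mp (by rw [h₁, hsig]; decide)
            have hx2neg : g i.castSucc x₂ < 0 := sign_eq_neg_one_iff.mp (by rw [h₂, heqτ, hsig]; decide)
            have : (1 - t) * g i.castSucc x₁ + t * g i.castSucc x₂ < 0 := by nlinarith
            simp only [hρ, Function.comp_apply]
            rw [hsig, sign_eq_neg_one_iff.mpr this]
            decide
          · have hx1pos : 0 < g i.castSucc x₁ := sign_eq_one_iff.mp (by rw [h₁, hsig]; decide)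
            have hx2pos : 0 < g i.castSucc x₂ := sign_eq_one_iff.mp (by rw [h₂, heqτ, hsig]; decide)
            have : 0 < (1 - t) * g i.castSucc x₁ + t * g i.castSucc x₂ := by nlinarith
            simp only [hρ, Function.comp_apply]
            rw [hsig, sign_eq_one_iff.mpr this]
            decide
        have hintcard : (ρ '' Apos ∩ ρ '' Aneg).ncard ≤ R.ncard :=
          Set.ncard_le_ncard hintR (Set.toFinite _)
        rw [pascal_sum]
        omega

open Module Submodule Set

private lemma orth_mem_iff {d : ℕ} (A : Set (EuclideanSpace ℝ (Fin d))) (v : EuclideanSpace ℝ (Fin d)) :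
    v ∈ (span ℝ A)ᗮ ↔ ∀ u ∈ A, ∑ j, u j * v j = 0 := by
  rw [Submodule.mem_orthogonal]
  constructor
  · intro h u hu
    have := h u (Submodule.subset_span hu)
    simpa [PiLp.inner_apply, mul_comm] using this
  · intro h u hu
    induction hu using Submodule.span_induction with
    | mem x hx => simpa [PiLp.inner_apply, mul_comm] using h x hx
    | zero => simp
    | add x y _ _ hx hy => rw [inner_add_left, hx, hy]; simp
    | smul c x _ hx => rw [inner_smul_left, hx]; simp

private lemma orth_rank {d : ℕ} (A : Set (EuclideanSpace ℝ (Fin d))) :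
    finrank ℝ (span ℝ A) + finrank ℝ ((span ℝ A)ᗮ) = d := by
  rw [Submodule.finrank_add_finrank_orthogonal]
  simp

private abbrev eA {n d : ℕ} (a : Fin n → (Fin d → ℝ)) (i : Fin n) : EuclideanSpace ℝ (Fin d) :=
  WithLp.toLp 2 (a i)

private noncomputable def toF {d : ℕ} (W : Submodule ℝ (EuclideanSpace ℝ (Fin d))) :
    Submodule ℝ (Fin d → ℝ) :=
  W.map ((PiLp.continuousLinearEquiv 2 ℝ (fun _ : Fin d => ℝ)).toLinearEquiv :
    EuclideanSpace ℝ (Fin d) →ₗ[ℝ] Fin d → ℝ)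

private lemma mem_toF {d : ℕ} (W : Submodule ℝ (EuclideanSpace ℝ (Fin d))) (v : Fin d → ℝ) :
    v ∈ toF W ↔ WithLp.toLp 2 v ∈ W := by
  unfold toF; rw [Submodule.mem_map_equiv]; rfl

private lemma finrank_toF {d : ℕ} (W : Submodule ℝ (EuclideanSpace ℝ (Fin d))) :
    finrank ℝ (toF W) = finrank ℝ W := by
  unfold toF; exact LinearEquiv.finrank_map_eq _ _

private lemma dot_sub {d : ℕ} (u x y : Fin d → ℝ) :
    (∑ j, u j * (x j - y j)) = (∑ j, u j * x j) - (∑ j, u j * y j) := by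
  rw [← Finset.sum_sub_distrib]
  exact Finset.sum_congr rfl fun j _ => by ring

private noncomputable def affK {d : ℕ} (u : Fin d → ℝ) (c : ℝ) : (Fin d → ℝ) →ᵃ[ℝ] ℝ where
  toFun x := (∑ j, u j * x j) - c
  linear :=
    { toFun := fun v => ∑ j, u j * v j
      map_add' := fun x y => by
        simp only [Pi.add_apply, mul_add]
        rw [Finset.sum_add_distrib]
      map_smul' := fun t x => by
        simp only [Pi.smul_apply, smul_eq_mul, RingHom.id_apply]
        rw [Finset.mul_sum]
        exact Finset.sum_congr rfl fun j _ => by ring }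
  map_vadd' p v := by
    simp only [vadd_eq_add, LinearMap.coe_mk, AddHom.coe_mk, Pi.add_apply]
    rw [show (∑ j, u j * (v j + p j)) = (∑ j, u j * v j) + (∑ j, u j * p j) by
      rw [← Finset.sum_add_distrib]; exact Finset.sum_congr rfl fun j _ => by ring]
    ring

private lemma affK_apply {d : ℕ} (u : Fin d → ℝ) (c : ℝ) (x : Fin d → ℝ) :
    affK u c x = (∑ j, u j * x j) - c := rfl

open Module Submodule Set

section Main

variable {n d : ℕ} (a : Fin n → (Fin d → ℝ)) (b : Fin n → ℝ)

private lemma keyW (σ : Fin n → SignType) (x₀ : Fin d → ℝ)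
    (hx₀ : ∀ i, SignType.sign ((∑ j, a i j * x₀ j) - b i) = σ i) :
    vectorSpan ℝ {x : Fin d → ℝ | ∀ i, SignType.sign ((∑ j, a i j * x j) - b i) = σ i}
      = toF ((span ℝ (eA a '' {i | σ i = 0} : Set (EuclideanSpace ℝ (Fin d))))ᗮ :
          Submodule ℝ (EuclideanSpace ℝ (Fin d))) := by
  classical
  set C : Set (Fin d → ℝ) := {x | ∀ i, SignType.sign ((∑ j, a i j * x j) - b i) = σ i} with hC
  apply le_antisymm
  · rw [vectorSpan_def, Submodule.span_le]
    rintro u ⟨x, hx, y, hy, rfl⟩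
    rw [SetLike.mem_coe, mem_toF, orth_mem_iff]
    rintro w ⟨i, hi, rfl⟩
    have hxi : (∑ j, a i j * x j) - b i = 0 := sign_eq_zero_iff.mp (by rw [hx i, hi])
    have hyi : (∑ j, a i j * y j) - b i = 0 := sign_eq_zero_iff.mp (by rw [hy i, hi])
    have : (∑ j, a i j * (x j - y j)) = 0 := by rw [dot_sub]; linarith
    exact this
  · intro v hv
    rw [mem_toF, orth_mem_iff] at hv
    by_cases hv0 : v = 0
    · rw [hv0]; exact Submodule.zero_mem _
    set c : Fin n → ℝ := fun i => (∑ j, a i j * x₀ j) - b i with hcdef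
    set w : Fin n → ℝ := fun i => ∑ j, a i j * v j with hwdef
    have hw0 : ∀ i, σ i = 0 → w i = 0 := fun i hi => hv (eA a i) ⟨i, hi, rfl⟩
    have hc0 : ∀ i, σ i = 0 → c i = 0 := fun i hi => sign_eq_zero_iff.mp (by rw [hx₀ i, hi])
    obtain ⟨ε, hε, hεle⟩ := eps_min (Finset.univ.filter fun i => σ i ≠ 0)
        (fun i => |c i| / (|w i| + 1)) (by
          intro i hi
          rw [Finset.mem_filter] at hi
          have hone : c i ≠ 0 := fun h0 => hi.2 (by
            rw [← hx₀ i, show (∑ j, a i j * x₀ j) - b i = c i from rfl, h0, sign_zero])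
          have := abs_pos.mpr hone
          positivity)
    have hx₀C : x₀ ∈ C := hx₀
    have hmem : x₀ + ε • v ∈ C := by
      intro i
      have happ : (∑ j, a i j * ((x₀ + ε • v) j)) - b i = c i + ε * w i := by
        simp only [Pi.add_apply, Pi.smul_apply, smul_eq_mul, hcdef, hwdef]
        rw [show (∑ j, a i j * (x₀ j + ε * v j)) = (∑ j, a i j * x₀ j) + ε * (∑ j, a i j * v j) by
          rw [Finset.mul_sum, ← Finset.sum_add_distrib]; exact Finset.sum_congr rfl fun j _ => by ring]
        ring
      rw [happ]
      rcases hsi : σ i with _ | _ | _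
      · rw [hw0 i hsi, hc0 i hsi]; simp
      · have hine : σ i ≠ 0 := by rw [hsi]; decide
        have hεi := hεle i (Finset.mem_filter.mpr ⟨Finset.mem_univ i, hine⟩)
        have hci : c i < 0 := sign_eq_neg_one_iff.mp (by rw [hx₀ i, hsi]; decide)
        have hwb : ε * (|w i| + 1) ≤ |c i| := by
          rw [← le_div_iff₀ (by positivity)] at *
          · exact hεi
        have : c i + ε * w i < 0 := by
          have h1 : w i ≤ |w i| := le_abs_self _
          have h2 : |c i| = -(c i) := abs_of_neg hci
          nlinarith
        rw [sign_eq_neg_one_iff.mpr this]; decide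
      · have hine : σ i ≠ 0 := by rw [hsi]; decide
        have hεi := hεle i (Finset.mem_filter.mpr ⟨Finset.mem_univ i, hine⟩)
        have hci : 0 < c i := sign_eq_one_iff.mp (by rw [hx₀ i, hsi]; decide)
        have hwb : ε * (|w i| + 1) ≤ |c i| := by
          rw [← le_div_iff₀ (by positivity)] at *
          · exact hεi
        have : 0 < c i + ε * w i := by
          have h1 : -(|w i|) ≤ w i := neg_abs_le _
          have h2 : |c i| = c i := abs_of_pos hci
          nlinarith
        rw [sign_eq_one_iff.mpr this]; decide
    have hvs : (x₀ + ε • v) -ᵥ x₀ ∈ vectorSpan ℝ C := vsub_mem_vectorSpan ℝ hmem hx₀C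
    have hεv : ε • v ∈ vectorSpan ℝ C := by
      simpa [vsub_eq_sub] using hvs
    have := Submodule.smul_mem (vectorSpan ℝ C) ε⁻¹ hεv
    rwa [smul_smul, inv_mul_cancel₀ (ne_of_gt hε), one_smul] at this

end Main

open Module Submodule Set

private lemma exS {n d k : ℕ} (hk : k ≤ d) (a : Fin n → (Fin d → ℝ)) (b : Fin n → ℝ)
    (σ : Fin n → SignType)
    (hσ : (∃ x : Fin d → ℝ, ∀ i, SignType.sign ((∑ j, a i j * x j) - b i) = σ i) ∧
        Module.finrank ℝ (affineSpan ℝ {x : Fin d → ℝ |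
            ∀ i, SignType.sign ((∑ j, a i j * x j) - b i) = σ i}).direction = k) :
    ∃ S : Finset (Fin n), ((↑S : Set (Fin n)) ⊆ {i | σ i = 0}) ∧
      span ℝ (eA a '' ↑S : Set (EuclideanSpace ℝ (Fin d)))
        = span ℝ (eA a '' {i | σ i = 0} : Set (EuclideanSpace ℝ (Fin d))) ∧
      S.card = d - k := by
  classical
  obtain ⟨⟨x₀, hx₀⟩, hrank⟩ := hσ
  rw [direction_affineSpan, keyW a b σ x₀ hx₀, finrank_toF] at hrank
  obtain ⟨t, htsub, htspan, htind⟩ :=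
    exists_linearIndependent ℝ (eA a '' {i | σ i = 0} : Set (EuclideanSpace ℝ (Fin d)))
  have htfin : t.Finite := (Set.Finite.image (eA a) (Set.toFinite _)).subset htsub
  set S : Finset (Fin n) := Finset.univ.filter
    (fun i => σ i = 0 ∧ eA a i ∈ t ∧ ∀ i' : Fin n, σ i' = 0 → a i' = a i → i ≤ i') with hSdef
  have hmemS : ∀ i, i ∈ S ↔ (σ i = 0 ∧ eA a i ∈ t ∧ ∀ i' : Fin n, σ i' = 0 → a i' = a i → i ≤ i') := by
    intro i; simp [hSdef]
  have hsub : (↑S : Set (Fin n)) ⊆ {i | σ i = 0} := fun i hi => ((hmemS i).mp hi).1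
  have himg : eA a '' (↑S : Set (Fin n)) = t := by
    apply Set.Subset.antisymm
    · rintro u ⟨i, hi, rfl⟩; exact ((hmemS i).mp hi).2.1
    · intro u hu
      obtain ⟨i₀, hi₀, rfl⟩ := htsub hu
      have hFne : (Finset.univ.filter (fun i => σ i = 0 ∧ a i = a i₀)).Nonempty :=
        ⟨i₀, by simpa using hi₀⟩
      have himF := Finset.min'_mem _ hFne
      rw [Finset.mem_filter] at himF
      refine ⟨Finset.min' _ hFne, ?_, congrArg (WithLp.toLp 2) himF.2.2⟩
      rw [Finset.mem_coe, hmemS]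
      refine ⟨himF.2.1, by rw [eA, himF.2.2]; exact hu, ?_⟩
      intro i' h0 heq
      exact Finset.min'_le _ i' (by
        rw [Finset.mem_filter]
        exact ⟨Finset.mem_univ _, h0, by rw [heq, himF.2.2]⟩)
  have hinj : Set.InjOn (eA a) (↑S : Set (Fin n)) := by
    intro i hi i' hi' heq
    replace heq : a i = a i' := congrArg WithLp.ofLp heq
    rw [Finset.mem_coe, hmemS] at hi hi'
    exact le_antisymm (hi.2.2 i' hi'.1 heq.symm) (hi'.2.2 i hi.1 heq)
  have hcardt : S.card = t.ncard := by
    rw [← Set.ncard_coe_finset S, ← himg, Set.ncard_image_of_injOn hinj]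
  have hrankt : finrank ℝ (span ℝ t) = t.ncard := by
    haveI := htfin.fintype
    rw [finrank_span_set_eq_card htind, Set.ncard_eq_toFinset_card']
  have h1 : t.ncard + finrank ℝ ((span ℝ (eA a '' {i | σ i = 0} : Set (EuclideanSpace ℝ (Fin d))))ᗮ) = d := by
    rw [← hrankt, htspan]
    exact orth_rank _
  have h2 : finrank ℝ ((span ℝ (eA a '' {i | σ i = 0} : Set (EuclideanSpace ℝ (Fin d))))ᗮ) = k := hrank
  exact ⟨S, hsub, by rw [himg, htspan], by omega⟩
private lemma nat_aux {n d k : ℕ} (hk : k ≤ d) (z : ℕ) (h2 : d - k ≤ z) (h3 : z ≤ n) :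
    n - z ≤ n - d + k := by omega

set_option maxHeartbeats 1000000 in
/-- Zaslavsky's bound: the number of `k`-dimensional faces of
an arrangement of `n` hyperplanes in `ℝ^d` is at most
`binom(n, d-k) · Σ_{i=0}^{k} binom(n-d+k, i)`.  Faces are encoded by their
sign vectors: a face of dimension `k` corresponds to a nonempty sign cell
whose affine span has dimension `k`. -/
theorem stmt14 (n d k : ℕ) (hk : k ≤ d)
    (a : Fin n → (Fin d → ℝ)) (b : Fin n → ℝ) (ha : ∀ i, a i ≠ 0) :
    {σ : Fin n → SignType |
        (∃ x : Fin d → ℝ, ∀ i, SignType.sign ((∑ j, a i j * x j) - b i) = σ i) ∧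
        Module.finrank ℝ (affineSpan ℝ {x : Fin d → ℝ |
            ∀ i, SignType.sign ((∑ j, a i j * x j) - b i) = σ i}).direction = k}.ncard
      ≤ n.choose (d - k) * ∑ i ∈ Finset.range (k + 1), (n - d + k).choose i := by
  classical
  set LHSset := {σ : Fin n → SignType |
      (∃ x : Fin d → ℝ, ∀ i, SignType.sign ((∑ j, a i j * x j) - b i) = σ i) ∧
      Module.finrank ℝ (affineSpan ℝ {x : Fin d → ℝ |
          ∀ i, SignType.sign ((∑ j, a i j * x j) - b i) = σ i}).direction = k} with hL
  have exS' : ∀ σ ∈ LHSset, ∃ S : Finset (Fin n), ((↑S : Set (Fin n)) ⊆ {i | σ i = 0}) ∧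
      span ℝ (eA a '' ↑S : Set (EuclideanSpace ℝ (Fin d)))
        = span ℝ (eA a '' {i | σ i = 0} : Set (EuclideanSpace ℝ (Fin d))) ∧
      S.card = d - k := by
    intro σ hσ
    rw [hL, Set.mem_setOf_eq] at hσ
    exact exS hk a b σ hσ
  set ch : (Fin n → SignType) → Finset (Fin n) :=
    fun σ => if h : σ ∈ LHSset then (exS' σ h).choose else ∅ with hch
  set N := ∑ i ∈ Finset.range (k + 1), (n - d + k).choose i with hN
  have hfin : LHSset.Finite := Set.toFinite _
  set P := Finset.powersetCard (d - k) (Finset.univ : Finset (Fin n)) with hP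
  have hchS : ∀ σ (h : σ ∈ LHSset), ch σ = (exS' σ h).choose := by
    intro σ h
    simp only [hch]
    rw [dif_pos h]
  have hmaps : ∀ σ ∈ hfin.toFinset, ch σ ∈ P := by
    intro σ hσ
    rw [Set.Finite.mem_toFinset] at hσ
    rw [hchS σ hσ, hP, Finset.mem_powersetCard]
    exact ⟨Finset.subset_univ _, (exS' σ hσ).choose_spec.2.2⟩
  have props : ∀ S : Finset (Fin n), ∀ σ, σ ∈ LHSset → ch σ = S →
      ((↑S : Set (Fin n)) ⊆ {i | σ i = 0} ∧
        span ℝ (eA a '' ↑S : Set (EuclideanSpace ℝ (Fin d)))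
          = span ℝ (eA a '' {i | σ i = 0} : Set (EuclideanSpace ℝ (Fin d)))) := by
    intro S σ h hcS
    rw [hchS σ h] at hcS
    have hsp := (exS' σ h).choose_spec
    rw [hcS] at hsp
    exact ⟨hsp.1, hsp.2.1⟩
  have fiber_le : ∀ S ∈ P, (hfin.toFinset.filter (fun σ => ch σ = S)).card ≤ N := by
    intro S hSP
    by_cases hfe : (hfin.toFinset.filter (fun σ => ch σ = S)).Nonempty
    swap
    · rw [Finset.not_nonempty_iff_eq_empty] at hfe
      rw [hfe, Finset.card_empty]
      exact Nat.zero_le _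
    obtain ⟨σ₀, hσ₀f⟩ := hfe
    rw [Finset.mem_filter, Set.Finite.mem_toFinset] at hσ₀f
    obtain ⟨hσ₀L, hσ₀S⟩ := hσ₀f
    obtain ⟨hSZ₀, hspan₀⟩ := props S σ₀ hσ₀L hσ₀S
    have hσ₀L' := hσ₀L
    rw [hL, Set.mem_setOf_eq] at hσ₀L'
    obtain ⟨⟨x₀, hx₀⟩, hrank₀⟩ := hσ₀L'
    -- the flat F
    set F : Set (Fin d → ℝ) := {x | ∀ i ∈ S, (∑ j, a i j * x j) - b i = 0} with hF
    have hFconv : Convex ℝ F := by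
      intro x hx y hy t u ht hu htu
      intro i hi
      have hxi := hx i hi
      have hyi := hy i hi
      have expand : (∑ j, a i j * ((t • x + u • y) j))
          = t * (∑ j, a i j * x j) + u * (∑ j, a i j * y j) := by
        simp only [Pi.add_apply, Pi.smul_apply, smul_eq_mul]
        rw [Finset.mul_sum, Finset.mul_sum, ← Finset.sum_add_distrib]
        exact Finset.sum_congr rfl fun j _ => by ring
      rw [expand]
      linear_combination t * hxi + u * hyi + b i * htu
    -- rank of the orthogonal complement
    have hrk : finrank ℝ ((span ℝ (eA a '' ↑S : Set (EuclideanSpace ℝ (Fin d))))ᗮ) = k := by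
      rw [hspan₀]
      rw [direction_affineSpan, keyW a b σ₀ x₀ hx₀, finrank_toF] at hrank₀
      exact hrank₀
    have hFle : vectorSpan ℝ F ≤
        toF (((span ℝ (eA a '' ↑S : Set (EuclideanSpace ℝ (Fin d))))ᗮ)) := by
      rw [vectorSpan_def, Submodule.span_le]
      rintro u ⟨x, hx, y, hy, rfl⟩
      rw [SetLike.mem_coe, mem_toF, orth_mem_iff]
      rintro w ⟨i, hi, rfl⟩
      have hxi := hx i (Finset.mem_coe.mp hi)
      have hyi := hy i (Finset.mem_coe.mp hi)
      have : (∑ j, a i j * (x j - y j)) = 0 := by rw [dot_sub]; linarith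
      exact this
    have hFdim : finrank ℝ (vectorSpan ℝ F) ≤ k :=
      le_of_le_of_eq (Submodule.finrank_mono hFle) ((finrank_toF _).trans hrk)
    -- the forced-zero set
    set Zs : Finset (Fin n) := Finset.univ.filter
      (fun i => ∀ x ∈ F, (∑ j, a i j * x j) - b i = 0) with hZs
    have hSZs : S ⊆ Zs := by
      intro i hi
      rw [hZs, Finset.mem_filter]
      exact ⟨Finset.mem_univ _, fun x hx => hx i hi⟩
    -- recovery of σ from its strict part
    have hrec : ∀ σ, σ ∈ LHSset → ch σ = S → ∀ i, (σ i = 0 ↔ i ∈ Zs) := by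
      intro σ hσL hσS i
      obtain ⟨hSZ, hspan⟩ := props S σ hσL hσS
      have hσL' := hσL
      rw [hL, Set.mem_setOf_eq] at hσL'
      obtain ⟨⟨xσ, hxσ⟩, _⟩ := hσL'
      have hxσF : xσ ∈ F := by
        intro i' hi'
        exact sign_eq_zero_iff.mp (by rw [hxσ i']; exact hSZ (Finset.mem_coe.mpr hi'))
      constructor
      · intro h0
        rw [hZs, Finset.mem_filter]
        refine ⟨Finset.mem_univ _, ?_⟩
        intro x hxF
        have hmemW : (fun j => x j - xσ j) ∈
            toF (((span ℝ (eA a '' ↑S : Set (EuclideanSpace ℝ (Fin d))))ᗮ)) := by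
          rw [mem_toF, orth_mem_iff]
          rintro w ⟨i', hi', rfl⟩
          show ∑ j, a i' j * (x j - xσ j) = 0
          have h1 := hxF i' (Finset.mem_coe.mp hi')
          have h2 := hxσF i' (Finset.mem_coe.mp hi')
          have := dot_sub (a i') x xσ
          rw [this]
          linarith
        rw [hspan] at hmemW
        have hzero : ∑ j, a i j * (x j - xσ j) = 0 :=
          (orth_mem_iff _ _).mp ((mem_toF _ _).mp hmemW) (eA a i) ⟨i, h0, rfl⟩
        have hgxσ : (∑ j, a i j * xσ j) - b i = 0 :=
          sign_eq_zero_iff.mp (by rw [hxσ i, h0])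
        have := dot_sub (a i) x xσ
        rw [this] at hzero
        linarith
      · intro hiZs
        rw [hZs, Finset.mem_filter] at hiZs
        have h0 : (∑ j, a i j * xσ j) - b i = 0 := hiZs.2 xσ hxσF
        rw [← hxσ i, h0, sign_zero]
    -- index bookkeeping
    set T : Finset (Fin n) := Zsᶜ with hT
    set m' := T.card with hm'
    have hTcard : m' ≤ n - d + k := by
      have h1 : T.card = n - Zs.card := by rw [hT, Finset.card_compl, Fintype.card_fin]
      have h2 : (d - k) ≤ Zs.card := by
        have hSP' := hSP
        rw [hP, Finset.mem_powersetCard] at hSP'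
        rw [← hSP'.2]
        exact Finset.card_le_card hSZs
      have h3 : Zs.card ≤ n := by
        have := Finset.card_le_card (Finset.subset_univ Zs)
        rwa [Finset.card_univ, Fintype.card_fin] at this
      rw [hm', h1]
      exact nat_aux hk Zs.card h2 h3
    set e : Fin m' ≃ {i // i ∈ T} := (Fintype.equivFinOfCardEq (by rw [Fintype.card_coe])).symm with he
    set G : Fin m' → ((Fin d → ℝ) →ᵃ[ℝ] ℝ) := fun j' => affK (a ↑(e j')) (b ↑(e j')) with hG
    have hbound := regionBound m' k F hFconv hFdim G
    set Aset := {τ : Fin m' → SignType | (∀ i, τ i ≠ 0) ∧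
        ∃ x ∈ F, ∀ i, SignType.sign (G i x) = τ i} with hAset
    set fib := hfin.toFinset.filter (fun σ => ch σ = S) with hfib
    have hfibmem : ∀ σ ∈ (↑fib : Set (Fin n → SignType)), σ ∈ LHSset ∧ ch σ = S := by
      intro σ hσ
      rw [Finset.mem_coe, hfib, Finset.mem_filter, Set.Finite.mem_toFinset] at hσ
      exact hσ
    have hmaps2 : ∀ σ ∈ (↑fib : Set (Fin n → SignType)), (fun j' => σ ↑(e j')) ∈ Aset := by
      intro σ hσ
      obtain ⟨hσL, hσS⟩ := hfibmem σ hσ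
      obtain ⟨hSZ, hspan⟩ := props S σ hσL hσS
      have hσL' := hσL
      rw [hL, Set.mem_setOf_eq] at hσL'
      obtain ⟨⟨xσ, hxσ⟩, _⟩ := hσL'
      have hxσF : xσ ∈ F := by
        intro i' hi'
        exact sign_eq_zero_iff.mp (by rw [hxσ i']; exact hSZ (Finset.mem_coe.mpr hi'))
      constructor
      · intro j'
        have hjT : ↑(e j') ∉ Zs := Finset.mem_compl.mp (e j').2
        intro h0
        exact hjT ((hrec σ hσL hσS _).mp h0)
      · refine ⟨xσ, hxσF, ?_⟩
        intro j'
        simp only [hG, affK_apply]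
        exact hxσ _
    have hinj2 : Set.InjOn (fun (σ : Fin n → SignType) => (fun j' => σ ↑(e j')))
        (↑fib : Set (Fin n → SignType)) := by
      intro σ hσ σ' hσ' heq
      obtain ⟨hσL, hσS⟩ := hfibmem σ hσ
      obtain ⟨hσ'L, hσ'S⟩ := hfibmem σ' hσ'
      funext i
      by_cases hiZ : i ∈ Zs
      · rw [(hrec σ hσL hσS i).mpr hiZ, (hrec σ' hσ'L hσ'S i).mpr hiZ]
      · have hiT : i ∈ T := Finset.mem_compl.mpr hiZ
        have := congrFun heq (e.symm ⟨i, hiT⟩)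
        simpa [Equiv.apply_symm_apply] using this
    calc fib.card = (↑fib : Set (Fin n → SignType)).ncard := (Set.ncard_coe_finset _).symm
      _ ≤ Aset.ncard := Set.ncard_le_ncard_of_injOn _ hmaps2 hinj2 (Set.toFinite _)
      _ ≤ ∑ i ∈ Finset.range (k + 1), m'.choose i := hbound
      _ ≤ N := by rw [hN]; exact Finset.sum_le_sum fun i _ => Nat.choose_le_choose i hTcard
  calc LHSset.ncard = hfin.toFinset.card := Set.ncard_eq_toFinset_card _ hfin
    _ = ∑ S ∈ P, (hfin.toFinset.filter (fun σ => ch σ = S)).card :=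
        Finset.card_eq_sum_card_fiberwise hmaps
    _ ≤ ∑ S ∈ P, N := Finset.sum_le_sum fiber_le
    _ = P.card * N := by rw [Finset.sum_const, smul_eq_mul]
    _ = n.choose (d - k) * N := by rw [hP, Finset.card_powersetCard, Finset.card_univ, Fintype.card_fin]
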